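/- Let κ be a nonlinear kernel map. Then there exists a point ρ* ∈ [0,1] with κ(ρ*) = ρ* such that for every initial value ρ_0 ∈ (-1,1), the kernel sequence ρ_{ℓ+1} = κ(ρ_ℓ) converges to ρ* as ℓ → ∞; moreover ρ* is the unique point of [0,1] with this property. -/

import Mathlib

open Filter

/-- The kernel map associated to nonnegative coefficients `a`. -/
noncomputable def kernelMap (a : ℕ → ℝ) (ρ : ℝ) : ℝ := ∑' k, a k * ρ ^ k

section Basic
variable {a : ℕ → ℝ}

lemma summable_kernel (ha : ∀ k, 0 ≤ a k) (Sa : Summable a) {ρ : ℝ} (h : |ρ| ≤ 1) :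
    Summable (fun k => a k * ρ ^ k) := by
  apply Summable.of_norm_bounded Sa
  intro k
  rw [norm_mul, norm_pow, Real.norm_eq_abs, Real.norm_eq_abs, abs_of_nonneg (ha k)]
  calc a k * |ρ| ^ k ≤ a k * 1 := by
        apply mul_le_mul_of_nonneg_left _ (ha k)
        exact pow_le_one₀ (abs_nonneg _) h
    _ = a k := mul_one _

lemma kernel_one (hsum : HasSum a 1) : kernelMap a 1 = 1 := by
  simp [kernelMap, hsum.tsum_eq]

lemma kernel_nonneg (ha : ∀ k, 0 ≤ a k) {ρ : ℝ} (h : 0 ≤ ρ) : 0 ≤ kernelMap a ρ :=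
  tsum_nonneg fun k => mul_nonneg (ha k) (pow_nonneg h k)

lemma kernel_mono (ha : ∀ k, 0 ≤ a k) (Sa : Summable a) {x y : ℝ}
    (hx : 0 ≤ x) (hxy : x ≤ y) (hy : y ≤ 1) :
    kernelMap a x ≤ kernelMap a y := by
  apply Summable.tsum_le_tsum _ (summable_kernel ha Sa (by rw [abs_of_nonneg hx]; linarith))
    (summable_kernel ha Sa (by rw [abs_of_nonneg (le_trans hx hxy)]; linarith))
  intro k
  exact mul_le_mul_of_nonneg_left (pow_le_pow_left₀ hx hxy k) (ha k)

lemma abs_kernel_le (ha : ∀ k, 0 ≤ a k) (Sa : Summable a) {ρ : ℝ} (h : |ρ| ≤ 1) :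
    |kernelMap a ρ| ≤ kernelMap a |ρ| := by
  have hs : HasSum (fun k => a k * |ρ| ^ k) (kernelMap a |ρ|) :=
    (summable_kernel ha Sa (by rwa [abs_abs])).hasSum
  have := tsum_of_norm_bounded hs (f := fun k => a k * ρ ^ k) ?_
  · simpa [Real.norm_eq_abs, kernelMap] using this
  · intro k
    rw [norm_mul, norm_pow, Real.norm_eq_abs, Real.norm_eq_abs, abs_of_nonneg (ha k)]

lemma kernel_lt_one (ha : ∀ k, 0 ≤ a k) (hsum : HasSum a 1) (hnl : ∃ k, 2 ≤ k ∧ 0 < a k)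
    {t : ℝ} (h0 : 0 ≤ t) (h1 : t < 1) : kernelMap a t < 1 := by
  obtain ⟨K, hK2, hKpos⟩ := hnl
  have Sa := hsum.summable
  have habs : |t| ≤ 1 := by rw [abs_of_nonneg h0]; linarith
  have : kernelMap a t < ∑' k, a k := by
    apply Summable.tsum_lt_tsum (i := K) _ _ (summable_kernel ha Sa habs) Sa
    · intro k
      calc a k * t ^ k ≤ a k * 1 := mul_le_mul_of_nonneg_left (pow_le_one₀ h0 h1.le) (ha k)
        _ = a k := mul_one _
    · have : t ^ K < 1 := pow_lt_one₀ h0 h1 (by omega)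
      nlinarith
  rwa [hsum.tsum_eq] at this

lemma kernel_lower (ha : ∀ k, 0 ≤ a k) (hsum : HasSum a 1) {s : ℝ}
    (hs : -1 ≤ s) (h0 : s ≤ 0) :
    a 0 + (1 - a 0) * s ≤ kernelMap a s := by
  have Sa := hsum.summable
  have hb : HasSum (fun k => (if k = 0 then a 0 - a 0 * s else 0) + a k * s)
      ((a 0 - a 0 * s) + 1 * s) := by
    apply HasSum.add (hasSum_ite_eq 0 (a 0 - a 0 * s)) (hsum.mul_right s)
  have hle : ∀ k, (if k = 0 then a 0 - a 0 * s else 0) + a k * s ≤ a k * s ^ k := by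
    intro k
    rcases Nat.eq_zero_or_pos k with hk | hk
    · subst hk; simp
    · have hk' : k ≠ 0 := hk.ne'
      simp only [hk', if_neg, if_false, zero_add]
      have hspow : s ≤ s ^ k := by
        have h1 : |s ^ k| ≤ -s := by
          rw [abs_pow, abs_of_nonpos h0]
          exact pow_le_of_le_one (by linarith) (by linarith) hk'
        have h2 : -|s ^ k| ≤ s ^ k := neg_abs_le _
        linarith
      exact mul_le_mul_of_nonneg_left hspow (ha k)
  have := Summable.tsum_le_tsum hle hb.summable (summable_kernel ha Sa (abs_le.mpr ⟨hs, by linarith⟩))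
  rw [hb.tsum_eq] at this
  calc a 0 + (1 - a 0) * s = (a 0 - a 0 * s) + 1 * s := by ring
    _ ≤ kernelMap a s := this

end Basic

section Main
variable {a : ℕ → ℝ}

lemma abs_pow_sub_pow_le' {r x y : ℝ} (hx : |x| ≤ r) (hy : |y| ≤ r) (k : ℕ) :
    |x ^ k - y ^ k| ≤ (k : ℝ) * r ^ (k - 1) * |x - y| := by
  have hr : 0 ≤ r := le_trans (abs_nonneg x) hx
  induction k with
  | zero => simp
  | succ n ih =>
    have key : x ^ (n + 1) - y ^ (n + 1) = x ^ n * (x - y) + (x ^ n - y ^ n) * y := by ring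
    have e1 : |x ^ n * (x - y)| ≤ r ^ n * |x - y| := by
      rw [abs_mul, abs_pow]
      exact mul_le_mul_of_nonneg_right (pow_le_pow_left₀ (abs_nonneg _) hx n) (abs_nonneg _)
    have e2 : |(x ^ n - y ^ n) * y| ≤ ((n : ℝ) * r ^ (n - 1) * |x - y|) * r := by
      rw [abs_mul]
      exact mul_le_mul ih hy (abs_nonneg _) (by positivity)
    have h1 : |x ^ (n + 1) - y ^ (n + 1)| ≤ r ^ n * |x - y| + ((n : ℝ) * r ^ (n - 1) * |x - y|) * r := by
      rw [key]; exact le_trans (abs_add_le _ _) (add_le_add e1 e2)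
    refine le_trans h1 ?_
    have h3 : n + 1 - 1 = n := by omega
    rw [h3]
    have h4 : (n : ℝ) * r ^ (n - 1) * |x - y| * r ≤ (n : ℝ) * r ^ n * |x - y| := by
      rcases Nat.eq_zero_or_pos n with h | h
      · subst h; simp
      · obtain ⟨m, rfl⟩ : ∃ m, n = m + 1 := ⟨n - 1, by omega⟩
        have hm : m + 1 - 1 = m := by omega
        rw [hm, pow_succ]
        apply le_of_eq; ring
    have h5 : ((n + 1 : ℕ) : ℝ) = (n : ℝ) + 1 := by push_cast; ring
    rw [h5]
    nlinarith [abs_nonneg (x - y), pow_nonneg hr n]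

lemma summable_coeff_mul (ha : ∀ k, 0 ≤ a k) (hsum : HasSum a 1) {r : ℝ}
    (h0 : 0 ≤ r) (hr : r < 1) (c : ℕ → ℝ) (hc : ∀ k, |c k| ≤ (k : ℝ) * r ^ (k - 1)) :
    Summable (fun k => a k * c k) := by
  have ha1 : ∀ k, a k ≤ 1 := fun k => le_hasSum hsum k (fun j _ => ha j)
  have hbig : Summable (fun k : ℕ => (k : ℝ) * r ^ (k - 1)) := by
    rw [← summable_nat_add_iff 1]
    have hgeo : Summable (fun j : ℕ => (j : ℝ) ^ 1 * r ^ j + r ^ j) := by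
      apply Summable.add
      · exact summable_pow_mul_geometric_of_norm_lt_one 1
          (by rwa [Real.norm_eq_abs, abs_of_nonneg h0])
      · exact summable_geometric_of_lt_one h0 hr
    refine hgeo.congr fun j => ?_
    simp only [Nat.add_sub_cancel, pow_one]
    push_cast; ring
  apply Summable.of_norm_bounded hbig
  intro k
  rw [norm_mul, Real.norm_eq_abs, Real.norm_eq_abs, abs_of_nonneg (ha k)]
  calc a k * |c k| ≤ 1 * ((k : ℝ) * r ^ (k - 1)) := by
        apply mul_le_mul (ha1 k) (hc k) (abs_nonneg _) zero_le_one
    _ = (k : ℝ) * r ^ (k - 1) := one_mul _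

lemma summable_D (ha : ∀ k, 0 ≤ a k) (hsum : HasSum a 1) {r : ℝ} (h0 : 0 ≤ r) (hr : r < 1) :
    Summable (fun k => a k * ((k : ℝ) * r ^ (k - 1))) := by
  apply summable_coeff_mul ha hsum h0 hr
  intro k
  rw [abs_of_nonneg (by positivity)]

lemma kernel_sub_le (ha : ∀ k, 0 ≤ a k) (hsum : HasSum a 1) {r x y : ℝ}
    (hr : r < 1) (hx : |x| ≤ r) (hy : |y| ≤ r) :
    |kernelMap a x - kernelMap a y| ≤ (∑' k, a k * ((k : ℝ) * r ^ (k - 1))) * |x - y| := by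
  have hr0 : 0 ≤ r := le_trans (abs_nonneg x) hx
  have Sa := hsum.summable
  have hx1 : |x| ≤ 1 := le_trans hx hr.le
  have hy1 : |y| ≤ 1 := le_trans hy hr.le
  have hsub : kernelMap a x - kernelMap a y = ∑' k, (a k * x ^ k - a k * y ^ k) :=
    (Summable.tsum_sub (summable_kernel ha Sa hx1) (summable_kernel ha Sa hy1)).symm
  rw [hsub]
  have hbound : HasSum (fun k => (a k * ((k : ℝ) * r ^ (k - 1))) * |x - y|)
      ((∑' k, a k * ((k : ℝ) * r ^ (k - 1))) * |x - y|) :=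
    ((summable_D ha hsum hr0 hr).hasSum).mul_right _
  have := tsum_of_norm_bounded hbound (f := fun k => a k * x ^ k - a k * y ^ k) ?_
  · simpa [Real.norm_eq_abs] using this
  · intro k
    show |a k * x ^ k - a k * y ^ k| ≤ _
    rw [← mul_sub, abs_mul, abs_of_nonneg (ha k)]
    calc a k * |x ^ k - y ^ k| ≤ a k * ((k : ℝ) * r ^ (k - 1) * |x - y|) :=
          mul_le_mul_of_nonneg_left (abs_pow_sub_pow_le' hx hy k) (ha k)
      _ = a k * ((k : ℝ) * r ^ (k - 1)) * |x - y| := by ring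

lemma kernel_continuousOn (ha : ∀ k, 0 ≤ a k) (hsum : HasSum a 1) {r : ℝ}
    (h0 : 0 ≤ r) (hr : r < 1) :
    ContinuousOn (kernelMap a) (Set.Icc (-r) r) := by
  set D := ∑' k, a k * ((k : ℝ) * r ^ (k - 1)) with hD
  have hD0 : 0 ≤ D := tsum_nonneg fun k => mul_nonneg (ha k) (by positivity)
  apply LipschitzOnWith.continuousOn (K := Real.toNNReal D)
  apply LipschitzOnWith.of_dist_le_mul
  intro x hx y hy
  rw [Real.dist_eq, Real.dist_eq, Real.coe_toNNReal _ hD0]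
  have hx' : |x| ≤ r := abs_le.mpr ⟨hx.1, hx.2⟩
  have hy' : |y| ≤ r := abs_le.mpr ⟨hy.1, hy.2⟩
  exact kernel_sub_le ha hsum hr hx' hy'

-- k q^{k-1} (1-q) ≤ 1 - q^k, strict for k ≥ 2, q < 1
lemma pow_gap (hq0 : (0:ℝ) ≤ q) (hq1 : q ≤ 1) (k : ℕ) :
    (k : ℝ) * q ^ (k - 1) * (1 - q) ≤ 1 - q ^ k := by
  have hgs : (1 - q) * (∑ j ∈ Finset.range k, q ^ j) = 1 - q ^ k := by
    have := geom_sum_mul q k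
    nlinarith [this]
  have hsum : (k : ℝ) * q ^ (k - 1) ≤ ∑ j ∈ Finset.range k, q ^ j := by
    have h2 : ∀ j ∈ Finset.range k, q ^ (k - 1) ≤ q ^ j := by
      intro j hj
      have := Finset.mem_range.mp hj
      exact pow_le_pow_of_le_one hq0 hq1 (by omega)
    calc (k : ℝ) * q ^ (k - 1) = ∑ _j ∈ Finset.range k, q ^ (k - 1) := by
          simp [Finset.sum_const, Finset.card_range, nsmul_eq_mul]
      _ ≤ ∑ j ∈ Finset.range k, q ^ j := Finset.sum_le_sum h2
  have h3 := mul_le_mul_of_nonneg_left hsum (sub_nonneg.mpr hq1)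
  calc (k : ℝ) * q ^ (k - 1) * (1 - q) = (1 - q) * ((k:ℝ) * q ^ (k-1)) := by ring
    _ ≤ (1 - q) * ∑ j ∈ Finset.range k, q ^ j := h3
    _ = 1 - q ^ k := hgs

lemma pow_gap_strict {q : ℝ} (hq0 : (0:ℝ) ≤ q) (hq1 : q < 1) {k : ℕ} (hk : 2 ≤ k) :
    (k : ℝ) * q ^ (k - 1) * (1 - q) < 1 - q ^ k := by
  have hgs : (1 - q) * (∑ j ∈ Finset.range k, q ^ j) = 1 - q ^ k := by
    have := geom_sum_mul q k
    nlinarith [this]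
  have hsum : (k : ℝ) * q ^ (k - 1) < ∑ j ∈ Finset.range k, q ^ j := by
    have hlt : ∑ _j ∈ Finset.range k, q ^ (k - 1) < ∑ j ∈ Finset.range k, q ^ j := by
      apply Finset.sum_lt_sum
      · intro j hj
        exact pow_le_pow_of_le_one hq0 hq1.le (by simp at hj; omega)
      · refine ⟨0, Finset.mem_range.mpr (by omega), ?_⟩
        simpa using pow_lt_one₀ hq0 hq1 (by omega)
    calc (k : ℝ) * q ^ (k - 1) = ∑ _j ∈ Finset.range k, q ^ (k - 1) := by
          simp [Finset.sum_const, Finset.card_range, nsmul_eq_mul]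
      _ < _ := hlt
  have h3 := mul_lt_mul_of_pos_left hsum (sub_pos.mpr hq1)
  calc (k : ℝ) * q ^ (k - 1) * (1 - q) = (1 - q) * ((k:ℝ) * q ^ (k-1)) := by ring
    _ < (1 - q) * ∑ j ∈ Finset.range k, q ^ j := h3
    _ = 1 - q ^ k := hgs

lemma D_lt_one (ha : ∀ k, 0 ≤ a k) (hsum : HasSum a 1) (hnl : ∃ k, 2 ≤ k ∧ 0 < a k)
    {q : ℝ} (hq0 : 0 ≤ q) (hq1 : q < 1) (hfix : kernelMap a q = q) :
    (∑' k, a k * ((k : ℝ) * q ^ (k - 1))) < 1 := by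
  obtain ⟨K, hK2, hKpos⟩ := hnl
  have Sa := hsum.summable
  have habs : |q| ≤ 1 := by rw [abs_of_nonneg hq0]; linarith
  have hlt : (∑' k, (a k * ((k : ℝ) * q ^ (k - 1))) * (1 - q)) <
      ∑' k, (a k - a k * q ^ k) := by
    apply Summable.tsum_lt_tsum (i := K)
    · intro k
      have := pow_gap hq0 hq1.le k
      have h2 := mul_le_mul_of_nonneg_left this (ha k)
      calc a k * ((k:ℝ) * q ^ (k-1)) * (1 - q) = a k * ((k:ℝ) * q ^ (k-1) * (1-q)) := by ring
        _ ≤ a k * (1 - q ^ k) := h2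
        _ = a k - a k * q ^ k := by ring
    · have := pow_gap_strict hq0 hq1 hK2
      have h2 := mul_lt_mul_of_pos_left this hKpos
      calc a K * ((K:ℝ) * q ^ (K-1)) * (1 - q) = a K * ((K:ℝ) * q ^ (K-1) * (1-q)) := by ring
        _ < a K * (1 - q ^ K) := h2
        _ = a K - a K * q ^ K := by ring
    · exact (summable_D ha hsum hq0 hq1).mul_right _
    · exact Sa.sub (summable_kernel ha Sa habs)
  rw [tsum_mul_right, Summable.tsum_sub Sa (summable_kernel ha Sa habs), hsum.tsum_eq] at hlt
  have hfix' : (∑' k, a k * q ^ k) = q := hfix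
  rw [hfix'] at hlt
  have hpos : 0 < 1 - q := by linarith
  exact lt_of_mul_lt_mul_right (by linarith) hpos.le

-- find r with q < r < 1 and D r < 1
lemma exists_r (ha : ∀ k, 0 ≤ a k) (hsum : HasSum a 1) (hnl : ∃ k, 2 ≤ k ∧ 0 < a k)
    {q : ℝ} (hq0 : 0 ≤ q) (hq1 : q < 1) (hfix : kernelMap a q = q) :
    ∃ r, q < r ∧ r < 1 ∧ (∑' k, a k * ((k : ℝ) * r ^ (k - 1))) < 1 := by
  set r0 : ℝ := (1 + q) / 2 with hr0def
  clear_value r0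
  have Sa := hsum.summable
  have hr00 : 0 < r0 := by rw [hr0def]; linarith
  have hr01 : r0 < 1 := by rw [hr0def]; linarith
  have hqr0 : q < r0 := by rw [hr0def]; linarith
  -- uniform second-derivative bound
  set M : ℝ := (∑' k : ℕ, (k : ℝ) ^ 2 * r0 ^ k) / r0 ^ 2 + 1 with hMdef
  clear_value M
  have hg : Summable (fun k : ℕ => (k : ℝ) ^ 2 * r0 ^ k) :=
    summable_pow_mul_geometric_of_norm_lt_one 2
      (by rw [Real.norm_eq_abs, abs_of_nonneg hr00.le]; exact hr01)
  have hgnn : ∀ k : ℕ, (0:ℝ) ≤ (k : ℝ) ^ 2 * r0 ^ k := fun k => by positivity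
  have hM0 : 0 < M := by
    have : 0 ≤ (∑' k : ℕ, (k : ℝ) ^ 2 * r0 ^ k) / r0 ^ 2 := by
      apply div_nonneg (tsum_nonneg hgnn) (by positivity)
    rw [hMdef]; linarith
  have hMb : ∀ k : ℕ, (k : ℝ) * ((k - 1 : ℕ) : ℝ) * r0 ^ (k - 1 - 1) ≤ M := by
    intro k
    rcases Nat.lt_or_ge k 2 with hk | hk
    · interval_cases k <;> simp <;> linarith
    · have h1 : ((k - 1 : ℕ) : ℝ) ≤ (k : ℝ) := by
        have : (k - 1 : ℕ) ≤ k := Nat.sub_le k 1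
        exact_mod_cast this
      have hkk : k - 1 - 1 = k - 2 := by omega
      have h2 : (k : ℝ) * ((k - 1 : ℕ) : ℝ) * r0 ^ (k - 2) ≤ (k : ℝ) ^ 2 * r0 ^ (k - 2) := by
        have : (k : ℝ) * ((k - 1 : ℕ) : ℝ) ≤ (k : ℝ) ^ 2 := by nlinarith [Nat.cast_nonneg (α := ℝ) k]
        exact mul_le_mul_of_nonneg_right this (by positivity)
      have h3 : (k : ℝ) ^ 2 * r0 ^ (k - 2) = ((k : ℝ) ^ 2 * r0 ^ k) / r0 ^ 2 := by
        obtain ⟨m, rfl⟩ : ∃ m, k = m + 2 := ⟨k - 2, by omega⟩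
        have : m + 2 - 2 = m := by omega
        rw [this]
        field_simp
        ring
      have h4 : ((k : ℝ) ^ 2 * r0 ^ k) / r0 ^ 2 ≤ (∑' k : ℕ, (k : ℝ) ^ 2 * r0 ^ k) / r0 ^ 2 := by
        gcongr
        exact Summable.le_tsum hg k (fun j _ => hgnn j)
      rw [hkk]
      calc (k : ℝ) * ((k - 1 : ℕ) : ℝ) * r0 ^ (k - 2) ≤ (k : ℝ) ^ 2 * r0 ^ (k - 2) := h2
        _ = ((k : ℝ) ^ 2 * r0 ^ k) / r0 ^ 2 := h3
        _ ≤ (∑' j : ℕ, (j : ℝ) ^ 2 * r0 ^ j) / r0 ^ 2 := h4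
        _ ≤ M := by rw [hMdef]; linarith
  -- now choose r
  set Dq : ℝ := ∑' k, a k * ((k : ℝ) * q ^ (k - 1)) with hDq
  clear_value Dq
  have hDq1 : Dq < 1 := by rw [hDq]; exact D_lt_one ha hsum hnl hq0 hq1 hfix
  set δ : ℝ := (1 - Dq) / (2 * M) with hδ
  clear_value δ
  have hδ0 : 0 < δ := by rw [hδ]; exact div_pos (by linarith) (by linarith)
  refine ⟨min r0 (q + δ), lt_min hqr0 (by linarith), lt_of_le_of_lt (min_le_left _ _) hr01, ?_⟩
  set r : ℝ := min r0 (q + δ) with hrdef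
  clear_value r
  have hqr : q < r := by rw [hrdef]; exact lt_min hqr0 (by linarith)
  have hrr0 : r ≤ r0 := by rw [hrdef]; exact min_le_left _ _
  have hr1 : r < 1 := lt_of_le_of_lt hrr0 hr01
  have hrq : r - q ≤ δ := by
    have : r ≤ q + δ := by rw [hrdef]; exact min_le_right _ _
    linarith
  have hr0pos : 0 ≤ r := le_trans hq0 hqr.le
  -- termwise bound
  set c : ℕ → ℝ := fun k => (k : ℝ) * (((k - 1 : ℕ) : ℝ) * r0 ^ (k - 1 - 1) * (r - q)) with hc
  have hcnn : ∀ k, 0 ≤ c k := by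
    intro k
    rw [hc]
    have : (0:ℝ) ≤ r - q := by linarith
    positivity
  have hrq0 : (0:ℝ) ≤ r - q := by linarith
  have hcM : ∀ k, c k ≤ M * (r - q) := by
    intro k
    have h5 := hMb k
    calc c k = ((k:ℝ) * ((k-1:ℕ):ℝ) * r0 ^ (k-1-1)) * (r - q) := by simp only [hc]; ring
      _ ≤ M * (r - q) := mul_le_mul_of_nonneg_right h5 hrq0
  have hterm : ∀ k, a k * ((k : ℝ) * r ^ (k - 1)) ≤ a k * ((k : ℝ) * q ^ (k - 1)) + a k * c k := by
    intro k
    have habs : |r ^ (k-1) - q ^ (k-1)| ≤ ((k - 1 : ℕ) : ℝ) * r0 ^ (k - 1 - 1) * |r - q| := by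
      apply abs_pow_sub_pow_le' (r := r0)
      · rw [abs_of_nonneg hr0pos]; exact hrr0
      · rw [abs_of_nonneg hq0]; linarith
    rw [abs_of_nonneg (by linarith : (0:ℝ) ≤ r - q)] at habs
    have h6 : r ^ (k-1) ≤ q ^ (k-1) + ((k - 1 : ℕ) : ℝ) * r0 ^ (k - 1 - 1) * (r - q) := by
      have := (abs_le.mp habs).2
      linarith [le_abs_self (r ^ (k-1) - q ^ (k-1))]
    have h7 : (k : ℝ) * r ^ (k-1) ≤ (k : ℝ) * q ^ (k-1) + c k := by
      have h8 := mul_le_mul_of_nonneg_left h6 (Nat.cast_nonneg (α := ℝ) k)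
      calc (k : ℝ) * r ^ (k-1) ≤ (k:ℝ) * (q ^ (k-1) + ((k - 1 : ℕ) : ℝ) * r0 ^ (k - 1 - 1) * (r - q)) := h8
        _ = (k : ℝ) * q ^ (k-1) + c k := by simp only [hc]; ring
    calc a k * ((k : ℝ) * r ^ (k - 1)) ≤ a k * ((k : ℝ) * q ^ (k-1) + c k) :=
          mul_le_mul_of_nonneg_left h7 (ha k)
      _ = a k * ((k : ℝ) * q ^ (k - 1)) + a k * c k := by ring
  have hsummc : Summable (fun k => a k * c k) := by
    apply Summable.of_nonneg_of_le (fun k => mul_nonneg (ha k) (hcnn k)) ?_ (Sa.mul_right (M * (r - q)))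
    intro k
    exact mul_le_mul_of_nonneg_left (hcM k) (ha k)
  have hsumg : Summable (fun k => a k * ((k : ℝ) * q ^ (k - 1)) + a k * c k) :=
    (summable_D ha hsum hq0 hq1).add hsummc
  have hDr : (∑' k, a k * ((k : ℝ) * r ^ (k - 1))) ≤ Dq + ∑' k, a k * c k := by
    have := Summable.tsum_le_tsum hterm (summable_D ha hsum hr0pos hr1) hsumg
    rw [Summable.tsum_add (summable_D ha hsum hq0 hq1) hsummc] at this
    rw [hDq]
    exact this
  have htail : (∑' k, a k * c k) ≤ M * (r - q) := by
    have := Summable.tsum_le_tsum (fun k => mul_le_mul_of_nonneg_left (hcM k) (ha k)) hsummc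
      (Sa.mul_right (M * (r - q)))
    rwa [tsum_mul_right, hsum.tsum_eq, one_mul] at this
  have : M * (r - q) ≤ M * δ := mul_le_mul_of_nonneg_left hrq hM0.le
  have hMδ : M * δ ≤ (1 - Dq) / 2 := by
    rw [hδ, mul_div_assoc']
    rw [div_le_div_iff₀ (by linarith) (by norm_num)]
    nlinarith
  calc (∑' k, a k * ((k : ℝ) * r ^ (k - 1))) ≤ Dq + ∑' k, a k * c k := hDr
    _ ≤ Dq + M * (r - q) := by linarith
    _ ≤ Dq + (1 - Dq) / 2 := by linarith
    _ < 1 := by linarith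
lemma kernel_lt_id (ha : ∀ k, 0 ≤ a k) (hsum : HasSum a 1) (hnl : ∃ k, 2 ≤ k ∧ 0 < a k)
    {q t : ℝ} (hq0 : 0 ≤ q) (hfix : kernelMap a q = q) (hqt : q < t) (ht : t < 1) :
    kernelMap a t < t := by
  obtain ⟨K, hK2, hKpos⟩ := hnl
  have Sa := hsum.summable
  have hq1 : q < 1 := lt_trans hqt ht
  set lam : ℝ := (t - q) / (1 - q) with hlam
  have hlam0 : 0 < lam := div_pos (by linarith) (by linarith)
  have hlam1 : lam < 1 := by
    rw [hlam, div_lt_one (by linarith)]; linarith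
  have hcomb : (1 - lam) * q + lam * 1 = t := by
    have hne : (1:ℝ) - q ≠ 0 := by linarith
    rw [hlam]
    field_simp
    ring
  have hconv : ∀ k, t ^ k ≤ (1 - lam) * q ^ k + lam * 1 := by
    intro k
    have := (convexOn_pow (𝕜 := ℝ) k).2 (Set.mem_Ici.mpr hq0) (Set.mem_Ici.mpr zero_le_one)
      (by linarith : (0:ℝ) ≤ 1 - lam) hlam0.le (by ring)
    simp only [smul_eq_mul] at this
    rw [hcomb] at this
    simpa using this
  have hconvK : t ^ K < (1 - lam) * q ^ K + lam * 1 := by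
    have hne : q ≠ 1 := by linarith
    have := (strictConvexOn_pow hK2).2 (Set.mem_Ici.mpr hq0) (Set.mem_Ici.mpr zero_le_one)
      (by intro h; exact hne h) (by linarith : (0:ℝ) < 1 - lam) hlam0 (by ring)
    simp only [smul_eq_mul] at this
    rw [hcomb] at this
    simpa using this
  have habsq : |q| ≤ 1 := by rw [abs_of_nonneg hq0]; linarith
  have habst : |t| ≤ 1 := by rw [abs_of_nonneg (by linarith : (0:ℝ) ≤ t)]; linarith
  have hsr : Summable (fun k => a k * ((1 - lam) * q ^ k + lam * 1)) := by
    have h1 : Summable (fun k => (1 - lam) * (a k * q ^ k) + lam * a k) :=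
      ((summable_kernel ha Sa habsq).mul_left (1 - lam)).add (Sa.mul_left lam)
    exact h1.congr fun k => by ring
  have hlt : kernelMap a t < ∑' k, a k * ((1 - lam) * q ^ k + lam * 1) := by
    apply Summable.tsum_lt_tsum (i := K)
    · intro k
      exact mul_le_mul_of_nonneg_left (hconv k) (ha k)
    · exact mul_lt_mul_of_pos_left hconvK hKpos
    · exact summable_kernel ha Sa habst
    · exact hsr
  have htsum : (∑' k, a k * ((1 - lam) * q ^ k + lam * 1)) = t := by
    have h1 : (∑' k, ((1 - lam) * (a k * q ^ k) + lam * a k))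
        = (1 - lam) * (∑' k, a k * q ^ k) + lam * (∑' k, a k) := by
      rw [Summable.tsum_add (((summable_kernel ha Sa habsq)).mul_left (1 - lam)) (Sa.mul_left lam),
        tsum_mul_left, tsum_mul_left]
    have h2 : (∑' k, a k * ((1 - lam) * q ^ k + lam * 1))
        = ∑' k, ((1 - lam) * (a k * q ^ k) + lam * a k) := by
      apply tsum_congr; intro k; ring
    rw [h2, h1, hsum.tsum_eq]
    have : (∑' k, a k * q ^ k) = q := hfix
    rw [this]
    linarith [hcomb]
  rw [htsum] at hlt
  exact hlt
lemma kernel_zero (ha : ∀ k, 0 ≤ a k) : kernelMap a 0 = a 0 := by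
  unfold kernelMap
  rw [tsum_eq_single 0]
  · norm_num
  · intro k hk
    simp [zero_pow hk]

lemma fixed_of_tendsto (ha : ∀ k, 0 ≤ a k) (hsum : HasSum a 1) {x : ℕ → ℝ} {L r : ℝ}
    (hr : r < 1) (hmem : ∀ n, |x n| ≤ r) (hL : |L| ≤ r)
    (hrec : ∀ n, x (n + 1) = kernelMap a (x n))
    (htd : Tendsto x atTop (nhds L)) : kernelMap a L = L := by
  have h1 : Tendsto (fun n => x (n + 1)) atTop (nhds L) :=
    (tendsto_add_atTop_iff_nat 1).mpr htd
  have h1' : Tendsto (fun n => kernelMap a (x n)) atTop (nhds L) := by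
    refine h1.congr fun n => hrec n
  have h2 : Tendsto (fun n => kernelMap a (x n)) atTop (nhds (kernelMap a L)) := by
    rw [tendsto_iff_dist_tendsto_zero]
    have hb : Tendsto (fun n => (∑' k, a k * ((k : ℝ) * r ^ (k - 1))) * |x n - L|)
        atTop (nhds 0) := by
      have := ((htd.sub_const L).abs).const_mul (∑' k, a k * ((k : ℝ) * r ^ (k - 1)))
      simpa using this
    apply squeeze_zero (fun n => dist_nonneg) _ hb
    intro n
    rw [Real.dist_eq]
    exact kernel_sub_le ha hsum hr (hmem n) hL
  exact tendsto_nhds_unique h2 h1'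
lemma tendsto_one_of_no_fixed (ha : ∀ k, 0 ≤ a k) (hsum : HasSum a 1)
    (hnl : ∃ k, 2 ≤ k ∧ 0 < a k)
    (hfp : ¬ ∃ q, 0 ≤ q ∧ q < 1 ∧ kernelMap a q = q)
    {ρ0 : ℝ} (hmem : ρ0 ∈ Set.Ioo (-1 : ℝ) 1) (ρ : ℕ → ℝ) (h0 : ρ 0 = ρ0)
    (hrec : ∀ l, ρ (l + 1) = kernelMap a (ρ l)) :
    Tendsto ρ atTop (nhds 1) := by
  have Sa := hsum.summable
  have ha0 : 0 < a 0 := by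
    rcases lt_or_eq_of_le (ha 0) with h | h
    · exact h
    · exfalso
      exact hfp ⟨0, le_refl _, one_pos, by rw [kernel_zero ha, ← h]⟩
  -- strictly above identity on [0,1)
  have hup : ∀ t : ℝ, 0 ≤ t → t < 1 → t < kernelMap a t := by
    intro t ht0 ht1
    by_contra hcon
    push_neg at hcon
    rcases eq_or_lt_of_le hcon with h | h
    · exact hfp ⟨t, ht0, ht1, h⟩
    · -- IVT gives a fixed point in [0,t]
      have hcont : ContinuousOn (fun x => kernelMap a x - x) (Set.Icc 0 t) := by
        apply ContinuousOn.sub _ continuousOn_id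
        apply (kernel_continuousOn ha hsum ht0 ht1).mono
        intro x hx
        exact ⟨by linarith [hx.1], hx.2⟩
      have hIVT := intermediate_value_Icc' ht0 hcont
      have hz : (0:ℝ) ∈ Set.Icc (kernelMap a t - t) (kernelMap a 0 - 0) := by
        constructor
        · linarith
        · rw [kernel_zero ha]; linarith
      obtain ⟨x, hx, hfx⟩ := hIVT hz
      apply hfp
      exact ⟨x, hx.1, lt_of_le_of_lt hx.2 ht1, by simpa [sub_eq_zero] using hfx⟩
  have hlt : ∀ s : ℝ, -1 < s → s < 1 → s < kernelMap a s := by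
    intro s hs1 hs2
    rcases le_or_gt 0 s with h | h
    · exact hup s h hs2
    · have := kernel_lower ha hsum (by linarith : (-1:ℝ) ≤ s) h.le
      nlinarith [ha 0]
  -- invariant: ρ n ∈ (-1,1)
  have hinv : ∀ n, -1 < ρ n ∧ ρ n < 1 := by
    intro n
    induction n with
    | zero => rw [h0]; exact ⟨hmem.1, hmem.2⟩
    | succ m ih =>
      have habs : |ρ m| < 1 := abs_lt.mpr ⟨ih.1, ih.2⟩
      have h1 : |kernelMap a (ρ m)| ≤ kernelMap a |ρ m| := abs_kernel_le ha Sa habs.le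
      have h2 : kernelMap a |ρ m| < 1 := kernel_lt_one ha hsum hnl (abs_nonneg _) habs
      have := abs_lt.mp (lt_of_le_of_lt h1 h2)
      rw [hrec m]
      exact this
  have hmono : Monotone ρ := by
    apply monotone_nat_of_le_succ
    intro n
    rw [hrec n]
    exact (hlt (ρ n) (hinv n).1 (hinv n).2).le
  have hbdd : BddAbove (Set.range ρ) := ⟨1, by rintro y ⟨n, rfl⟩; exact (hinv n).2.le⟩
  have htd : Tendsto ρ atTop (nhds (⨆ n, ρ n)) := tendsto_atTop_ciSup hmono hbdd
  set L := ⨆ n, ρ n with hL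
  have hLub : ∀ n, ρ n ≤ L := fun n => le_ciSup hbdd n
  have hL1 : L ≤ 1 := ciSup_le fun n => (hinv n).2.le
  have hL0 : ρ 0 ≤ L := hLub 0
  have hLgt : -1 < L := lt_of_lt_of_le (hinv 0).1 hL0
  have hLeq : L = 1 := by
    by_contra hne
    have hL1' : L < 1 := lt_of_le_of_ne hL1 hne
    set r : ℝ := max (|ρ0|) (|L|) with hr
    have hr1 : r < 1 := by
      apply max_lt (abs_lt.mpr ⟨hmem.1, hmem.2⟩)
      exact abs_lt.mpr ⟨hLgt, hL1'⟩
    have hxmem : ∀ n, |ρ n| ≤ r := by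
      intro n
      rw [abs_le]
      constructor
      · calc -r ≤ -|ρ0| := by simp [hr]
          _ ≤ ρ0 := neg_abs_le _
          _ = ρ 0 := h0.symm
          _ ≤ ρ n := hmono (Nat.zero_le n)
      · calc ρ n ≤ L := hLub n
          _ ≤ |L| := le_abs_self _
          _ ≤ r := le_max_right _ _
    have hLmem : |L| ≤ r := le_max_right _ _
    have := fixed_of_tendsto ha hsum hr1 hxmem hLmem hrec htd
    have := hlt L hLgt hL1'
    linarith
  rw [hLeq] at htd
  exact htd
lemma tendsto_fixed (ha : ∀ k, 0 ≤ a k) (hsum : HasSum a 1)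
    (hnl : ∃ k, 2 ≤ k ∧ 0 < a k) {q : ℝ} (hq0 : 0 ≤ q) (hq1 : q < 1)
    (hfix : kernelMap a q = q)
    {ρ0 : ℝ} (hmem : ρ0 ∈ Set.Ioo (-1 : ℝ) 1) (ρ : ℕ → ℝ) (h0 : ρ 0 = ρ0)
    (hrec : ∀ l, ρ (l + 1) = kernelMap a (ρ l)) :
    Tendsto ρ atTop (nhds q) := by
  have Sa := hsum.summable
  obtain ⟨r, hqr, hr1, hDr⟩ := exists_r ha hsum hnl hq0 hq1 hfix
  set Dr : ℝ := ∑' k, a k * ((k : ℝ) * r ^ (k - 1)) with hDrdef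
  have hDr0 : 0 ≤ Dr := tsum_nonneg fun k => mul_nonneg (ha k)
    (mul_nonneg (Nat.cast_nonneg k) (pow_nonneg (by linarith) _))
  have hr0 : 0 ≤ r := le_trans hq0 hqr.le
  have habsr : |r| ≤ r := by rw [abs_of_nonneg hr0]
  have habsq : |q| ≤ r := by rw [abs_of_nonneg hq0]; exact hqr.le
  have hκr : kernelMap a r < r := by
    have h := kernel_sub_le ha hsum hr1 habsr habsq
    rw [hfix, abs_of_nonneg (by linarith : (0:ℝ) ≤ r - q)] at h
    have h2 := le_abs_self (kernelMap a r - q)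
    nlinarith
  -- majorant sequence
  set s : ℕ → ℝ := fun n => (kernelMap a)^[n] (max |ρ0| r) with hsdef
  have hs0 : s 0 = max |ρ0| r := rfl
  have hssucc : ∀ n, s (n + 1) = kernelMap a (s n) := by
    intro n
    simp only [hsdef]
    exact Function.iterate_succ_apply' _ n _
  have hρ01 : |ρ0| < 1 := abs_lt.mpr ⟨hmem.1, hmem.2⟩
  have hs0lt : s 0 < 1 := by rw [hs0]; exact max_lt hρ01 hr1
  have hinv : ∀ n, q ≤ s n ∧ s n < 1 := by
    intro n
    induction n with
    | zero => exact ⟨by rw [hs0]; exact le_trans hqr.le (le_max_right _ _), hs0lt⟩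
    | succ m ih =>
      constructor
      · rw [hssucc m, ← hfix]
        exact kernel_mono ha Sa hq0 ih.1 ih.2.le
      · rw [hssucc m]
        exact kernel_lt_one ha hsum hnl (le_trans hq0 ih.1) ih.2
  have hanti : ∀ n, s (n + 1) ≤ s n := by
    intro n
    rcases eq_or_lt_of_le (hinv n).1 with h | h
    · rw [hssucc n, ← h, hfix]
    · rw [hssucc n]
      exact (kernel_lt_id ha hsum hnl hq0 hfix h (hinv n).2).le
  have hA : Antitone s := antitone_nat_of_succ_le hanti
  have hbdd : BddBelow (Set.range s) := ⟨q, by rintro y ⟨n, rfl⟩; exact (hinv n).1⟩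
  have htdS : Tendsto s atTop (nhds (⨅ n, s n)) := tendsto_atTop_ciInf hA hbdd
  set Ls := ⨅ n, s n with hLs
  have hLsq : q ≤ Ls := le_ciInf fun n => (hinv n).1
  have hLs0 : Ls ≤ s 0 := ciInf_le hbdd 0
  have hLs1 : Ls < 1 := lt_of_le_of_lt hLs0 hs0lt
  have hsmem : ∀ n, |s n| ≤ s 0 := by
    intro n
    rw [abs_of_nonneg (le_trans hq0 (hinv n).1)]
    exact hA (Nat.zero_le n)
  have hLsmem : |Ls| ≤ s 0 := by
    rw [abs_of_nonneg (le_trans hq0 hLsq)]; exact hLs0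
  have hfixLs : kernelMap a Ls = Ls :=
    fixed_of_tendsto ha hsum hs0lt hsmem hLsmem hssucc htdS
  have hLsr : Ls = q := by
    rcases eq_or_lt_of_le hLsq with h | h
    · exact h.symm
    · exfalso
      have := kernel_lt_id ha hsum hnl hq0 hfix h hLs1
      rw [hfixLs] at this
      linarith
  rw [hLsr] at htdS
  -- eventually below r
  obtain ⟨N, hN⟩ := eventually_atTop.mp (htdS.eventually_lt_const hqr)
  have hsN : s N < r := hN N le_rfl
  -- |ρ n| ≤ s n
  have hρs : ∀ n, |ρ n| ≤ s n := by
    intro n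
    induction n with
    | zero => rw [h0, hs0]; exact le_max_left _ _
    | succ m ih =>
      have h1 : |ρ m| ≤ 1 := le_trans ih (hinv m).2.le
      rw [hrec m, hssucc m]
      calc |kernelMap a (ρ m)| ≤ kernelMap a |ρ m| := abs_kernel_le ha Sa h1
        _ ≤ kernelMap a (s m) := kernel_mono ha Sa (abs_nonneg _) ih (hinv m).2.le
  -- geometric contraction after N
  have hgeo : ∀ j, |ρ (j + N)| ≤ r ∧ |ρ (j + N) - q| ≤ Dr ^ j * |ρ N - q| := by
    intro j
    induction j with
    | zero => simp only [Nat.zero_add, pow_zero, one_mul]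
              exact ⟨le_trans (hρs N) hsN.le, le_refl _⟩
    | succ m ih =>
      have hmm : m + 1 + N = (m + N) + 1 := by omega
      constructor
      · rw [hmm, hrec (m + N)]
        calc |kernelMap a (ρ (m + N))| ≤ kernelMap a |ρ (m + N)| :=
              abs_kernel_le ha Sa (le_trans ih.1 hr1.le)
          _ ≤ kernelMap a r := kernel_mono ha Sa (abs_nonneg _) ih.1 hr1.le
          _ ≤ r := hκr.le
      · rw [hmm, hrec (m + N)]
        have h1 : |kernelMap a (ρ (m + N)) - q| ≤ Dr * |ρ (m + N) - q| := by
          have := kernel_sub_le ha hsum hr1 ih.1 habsq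
          rwa [hfix] at this
        calc |kernelMap a (ρ (m + N)) - q| ≤ Dr * |ρ (m + N) - q| := h1
          _ ≤ Dr * (Dr ^ m * |ρ N - q|) := mul_le_mul_of_nonneg_left ih.2 hDr0
          _ = Dr ^ (m + 1) * |ρ N - q| := by ring
  have htd1 : Tendsto (fun j => ρ (j + N)) atTop (nhds q) := by
    rw [tendsto_iff_dist_tendsto_zero]
    have hb : Tendsto (fun j => Dr ^ j * |ρ N - q|) atTop (nhds 0) := by
      have := (tendsto_pow_atTop_nhds_zero_of_lt_one hDr0 hDr).mul_const (|ρ N - q|)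
      simpa using this
    apply squeeze_zero (fun j => dist_nonneg) _ hb
    intro j
    rw [Real.dist_eq]
    exact (hgeo j).2
  exact (tendsto_add_atTop_iff_nat N).mp htd1

end Main

theorem kernel_global_convergence
    (a : ℕ → ℝ) (ha : ∀ k, 0 ≤ a k) (hsum : HasSum a 1)
    (hnl : ∃ k, 2 ≤ k ∧ 0 < a k) :
    ∃! ρs : ℝ, ρs ∈ Set.Icc (0 : ℝ) 1 ∧ kernelMap a ρs = ρs ∧
      ∀ ρ0 ∈ Set.Ioo (-1 : ℝ) 1, ∀ ρ : ℕ → ℝ, ρ 0 = ρ0 →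
        (∀ ℓ, ρ (ℓ + 1) = kernelMap a (ρ ℓ)) →
        Tendsto ρ atTop (nhds ρs) := by
  -- canonical orbit starting at 0, used for uniqueness
  set σ : ℕ → ℝ := fun n => (kernelMap a)^[n] 0 with hσdef
  have hσ0 : σ 0 = 0 := rfl
  have hσrec : ∀ n, σ (n + 1) = kernelMap a (σ n) := by
    intro n
    simp only [hσdef]
    exact Function.iterate_succ_apply' _ n _
  have hmem0 : (0:ℝ) ∈ Set.Ioo (-1 : ℝ) 1 := by norm_num
  by_cases hfp : ∃ q, 0 ≤ q ∧ q < 1 ∧ kernelMap a q = q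
  · obtain ⟨q, hq0, hq1, hfix⟩ := hfp
    have hconv : ∀ ρ0 ∈ Set.Ioo (-1 : ℝ) 1, ∀ ρ : ℕ → ℝ, ρ 0 = ρ0 →
        (∀ ℓ, ρ (ℓ + 1) = kernelMap a (ρ ℓ)) → Tendsto ρ atTop (nhds q) := by
      intro ρ0 hρ0 ρ h0 hrec
      exact tendsto_fixed ha hsum hnl hq0 hq1 hfix hρ0 ρ h0 hrec
    refine ⟨q, ⟨⟨hq0, hq1.le⟩, hfix, hconv⟩, ?_⟩
    intro y hy
    have h1 : Tendsto σ atTop (nhds y) := hy.2.2 0 hmem0 σ hσ0 hσrec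
    have h2 : Tendsto σ atTop (nhds q) := hconv 0 hmem0 σ hσ0 hσrec
    exact tendsto_nhds_unique h1 h2
  · have hconv : ∀ ρ0 ∈ Set.Ioo (-1 : ℝ) 1, ∀ ρ : ℕ → ℝ, ρ 0 = ρ0 →
        (∀ ℓ, ρ (ℓ + 1) = kernelMap a (ρ ℓ)) → Tendsto ρ atTop (nhds 1) := by
      intro ρ0 hρ0 ρ h0 hrec
      exact tendsto_one_of_no_fixed ha hsum hnl hfp hρ0 ρ h0 hrec
    refine ⟨1, ⟨⟨zero_le_one, le_refl 1⟩, kernel_one hsum, hconv⟩, ?_⟩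
    intro y hy
    have h1 : Tendsto σ atTop (nhds y) := hy.2.2 0 hmem0 σ hσ0 hσrec
    have h2 : Tendsto σ atTop (nhds 1) := hconv 0 hmem0 σ hσ0 hσrec
    exact tendsto_nhds_unique h1 h2
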